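/- For a continuously differentiable f: ℝ² → ℝ with ∇f(x) ≠ 0, the internal morphological gradient (f(x) − ε_r[f](x))/r, where ε_r is the erosion with the closed Euclidean disk of radius r, converges to |∇f(x)| as r → 0⁺. -/

import Mathlib

open Filter Set

/-- For `f ∈ C¹(ℝ²)` with nonvanishing gradient, the internal morphological
gradient with disk structuring elements converges to `‖∇f(x)‖` as `r → 0⁺`. -/
theorem internal_gradient_tendsto_gradient_norm
    (f : EuclideanSpace ℝ (Fin 2) → ℝ) (hf : ContDiff ℝ 1 f)
    (x : EuclideanSpace ℝ (Fin 2)) (hx : gradient f x ≠ 0) :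
    Tendsto (fun r : ℝ =>
        (f x - sInf ((fun b => f (x + b)) '' Metric.closedBall 0 r)) / r)
      (nhdsWithin 0 (Ioi 0)) (nhds ‖gradient f x‖) := by
  set g := gradient f x with hg
  have hG : 0 < ‖g‖ := norm_pos_iff.mpr hx
  have hgrad : HasGradientAt f g x :=
    (hf.differentiable one_ne_zero x).hasGradientAt
  have hlo := hasGradientAt_iff_isLittleO.mp hgrad
  rw [Metric.tendsto_nhdsWithin_nhds]
  intro ε hε
  obtain ⟨δ, hδ, hδ'⟩ := Metric.eventually_nhds_iff.mp
    (hlo.def (by linarith : (0:ℝ) < ε/2))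
  refine ⟨δ, hδ, ?_⟩
  intro r hr hrd
  have hr0 : 0 < r := hr
  have hrδ : r < δ := by
    rwa [Real.dist_eq, sub_zero, abs_of_pos hr0] at hrd
  -- the key pointwise estimate
  have key : ∀ b : EuclideanSpace ℝ (Fin 2), ‖b‖ ≤ r →
      |f (x + b) - f x - inner ℝ g b| ≤ ε/2 * ‖b‖ := by
    intro b hb
    have hmem : dist (x + b) x < δ := by
      rw [dist_eq_norm, add_sub_cancel_left]; exact lt_of_le_of_lt hb hrδ
    have := hδ' hmem
    simpa [add_sub_cancel_left] using this
  set S := (fun b => f (x + b)) '' Metric.closedBall 0 r with hS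
  have hne : S.Nonempty :=
    ⟨f (x + 0), mem_image_of_mem _ (Metric.mem_closedBall_self hr0.le)⟩
  have hlb : ∀ z ∈ S, f x - (‖g‖ + ε/2) * r ≤ z := by
    rintro z ⟨b, hb, rfl⟩
    have hbr : ‖b‖ ≤ r := by
      rwa [Metric.mem_closedBall, dist_zero_right] at hb
    have h1 := key b hbr
    have h2 : -(‖g‖ * ‖b‖) ≤ inner ℝ g b := by
      have := abs_real_inner_le_norm g b
      cases abs_le.mp this with
      | intro h _ => linarith
    have h3 : ‖g‖ * ‖b‖ ≤ ‖g‖ * r := mul_le_mul_of_nonneg_left hbr (norm_nonneg g)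
    have h4 : ε/2 * ‖b‖ ≤ ε/2 * r := mul_le_mul_of_nonneg_left hbr (by linarith)
    have h5 := abs_le.mp h1
    nlinarith [h5.1, h5.2]
  have hbdd : BddBelow S := ⟨f x - (‖g‖ + ε/2) * r, hlb⟩
  have hInf_ge : f x - (‖g‖ + ε/2) * r ≤ sInf S := le_csInf hne hlb
  -- upper bound via b₀ = -(r/‖g‖) • g
  set b₀ : EuclideanSpace ℝ (Fin 2) := (-(r/‖g‖)) • g with hb₀
  have hb₀norm : ‖b₀‖ = r := by
    rw [hb₀, norm_smul, Real.norm_eq_abs, abs_neg, abs_of_pos (div_pos hr0 hG),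
      div_mul_cancel₀ _ hG.ne']
  have hb₀mem : b₀ ∈ Metric.closedBall (0 : EuclideanSpace ℝ (Fin 2)) r := by
    rw [Metric.mem_closedBall, dist_zero_right, hb₀norm]
  have hip : (inner ℝ g b₀ : ℝ) = -(r * ‖g‖) := by
    rw [hb₀, real_inner_smul_right, real_inner_self_eq_norm_sq]
    field_simp
  have hkey := key b₀ hb₀norm.le
  rw [hb₀norm, hip] at hkey
  have hInf_le : sInf S ≤ f (x + b₀) := csInf_le hbdd (mem_image_of_mem _ hb₀mem)
  have h5 := abs_le.mp hkey
  -- conclude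
  have hd : (f x - sInf S) / r - ‖g‖ = (f x - sInf S - ‖g‖ * r) / r := by
    field_simp
  rw [Real.dist_eq, hd, abs_div, abs_of_pos hr0, div_lt_iff₀ hr0]
  rw [abs_lt]
  constructor <;> nlinarith [h5.1, h5.2, hInf_ge, hInf_le]
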